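/- Suppose that for every u ∈ U there exists v ∈ V such that no coordinate c satisfies u[c] = v[c] = w[c] = 1. Then the radius of the radius-construction graph G_rad is at least 6a+1; that is, for every vertex z of G_rad there exists a vertex t such that every walk between z and t has length at least 6a+1. -/

import Mathlib

/-!
Radius lower-bound construction (Theorem 3.2, "no hitting set" case): if for every
`u ∈ U` there is some `v ∈ V` sharing no coordinate `c` with
`u[c] = v[c] = w[c] = 1`, then the radius of the radius-construction graph `G_rad`
is at least `6a+1`: every vertex `z` has some vertex `t` such that every walk
between `z` and `t` has length at least `6a+1`.
-/

namespace RadConstr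

variable {B P : Type*}

/-- Vertices of a graph assembled from base vertices `B` and, for each path request
`p : P` of length `L p`, the `L p - 1` internal vertices of the path. -/
abbrev Vert (B P : Type*) (L : P → ℕ) : Type _ := B ⊕ (Σ p : P, Fin (L p - 1))

/-- `pos e0 e1 L p i z` : `z` is the `i`-th vertex along the path `p`
(whose endpoints are `e0 p` and `e1 p` and whose length is `L p`). -/
def pos (e0 e1 : P → B) (L : P → ℕ) (p : P) (i : ℕ) (z : Vert B P L) : Prop :=
  (i = 0 ∧ z = Sum.inl (e0 p)) ∨ (i = L p ∧ z = Sum.inl (e1 p)) ∨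
    (∃ h : i - 1 < L p - 1, 0 < i ∧ i < L p ∧ z = Sum.inr ⟨p, ⟨i - 1, h⟩⟩)

/-- The graph obtained from the base vertex set `B` by adding, for each `p : P`, an
internally vertex-disjoint path of length `L p` between the vertices `e0 p` and
`e1 p` (for `L p = 1` this is just an edge). -/
def pathGraph (e0 e1 : P → B) (L : P → ℕ) : SimpleGraph (Vert B P L) where
  Adj x y := x ≠ y ∧ ∃ p i, i < L p ∧
    ((pos e0 e1 L p i x ∧ pos e0 e1 L p (i + 1) y) ∨
     (pos e0 e1 L p i y ∧ pos e0 e1 L p (i + 1) x))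
  symm := ⟨by
    rintro x y ⟨hne, p, i, hi, h⟩
    exact ⟨hne.symm, p, i, hi, h.symm⟩⟩
  loopless := ⟨fun x h => h.1 rfl⟩

/-- Base (named) vertices of the radius-construction graph `G_rad`: two copies
(`side = false` is the left copy, `side = true` the right copy) of the base vertices
of `G(U,V,w,a)`, with the vertices `u^0` of the two copies identified. -/
inductive Base (ℓ : ℕ) (U V : Set (Fin ℓ → Bool)) : Type
  | cU (side : Bool) (c : Fin ℓ)
  | cV (side : Bool) (c : Fin ℓ)
  | u0 (u : U)                       -- shared between the two copies
  | ua (side : Bool) (u : U)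
  | v0 (side : Bool) (v : V)
  | va (side : Bool) (v : V)
  | x (side : Bool)
  | y (side : Bool)

/-- Path requests of the radius-construction graph `G_rad` (each request of
`G(U,V,w,a)` appears once per side). -/
inductive Pth (ℓ : ℕ) (U V : Set (Fin ℓ → Bool)) (w : Fin ℓ → Bool) : Type
  | upath (side : Bool) (u : U)                                 -- u^0 … u^a, length a
  | vpath (side : Bool) (v : V)                                 -- v^0 … v^a, length a
  | uc (side : Bool) (u : U) (c : Fin ℓ) (h : u.1 c = true)     -- u^a — c_U, length a
  | vc (side : Bool) (v : V) (c : Fin ℓ) (h : v.1 c = true)     -- c_V — v^0, length a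
  | wc (side : Bool) (c : Fin ℓ) (h : w c = true)               -- edge c_U — c_V
  | xu (side : Bool) (u : U)                                    -- x — u^a, length a
  | yv (side : Bool) (v : V)                                    -- y — v^0, length a

variable {ℓ : ℕ} {U V : Set (Fin ℓ → Bool)} {w : Fin ℓ → Bool}

/-- First endpoint of each path request. -/
def e0 : Pth ℓ U V w → Base ℓ U V
  | .upath _ u => .u0 u
  | .vpath s v => .v0 s v
  | .uc s u _ _ => .ua s u
  | .vc s _ c _ => .cV s c
  | .wc s c _ => .cU s c
  | .xu s _ => .x s
  | .yv s _ => .y s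

/-- Second endpoint of each path request. -/
def e1 : Pth ℓ U V w → Base ℓ U V
  | .upath s u => .ua s u
  | .vpath s v => .va s v
  | .uc s _ c _ => .cU s c
  | .vc s v _ _ => .v0 s v
  | .wc s c _ => .cV s c
  | .xu s u => .ua s u
  | .yv s v => .v0 s v

/-- Length of each path request: the `c_U — c_V` connections are single edges,
all other paths have length `a`. -/
def len (a : ℕ) : Pth ℓ U V w → ℕ
  | .wc _ _ _ => 1
  | _ => a

/-- The radius-construction graph `G_rad`: two copies of `G(U,V,w,a)` with the
vertices `u^0` identified. -/
def Grad (a ℓ : ℕ) (U V : Set (Fin ℓ → Bool)) (w : Fin ℓ → Bool) :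
    SimpleGraph (Vert (Base ℓ U V) (Pth ℓ U V w) (len a)) :=
  pathGraph e0 e1 (len a)



section Lipschitz
variable {B P : Type*} (E0 E1 : P → B) (L : P → ℕ) (φ : B → ℕ)

/-- Extend a potential on base vertices to all vertices, interpolating along paths. -/
def lift : Vert B P L → ℕ
  | .inl b => φ b
  | .inr ⟨p, j⟩ => max (φ (E0 p) - (j.1 + 1)) (φ (E1 p) - (L p - (j.1 + 1)))

lemma lift_pos (hφ : ∀ p, φ (E0 p) ≤ φ (E1 p) + L p ∧ φ (E1 p) ≤ φ (E0 p) + L p)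
    {p : P} {i : ℕ} {z : Vert B P L} (h : pos E0 E1 L p i z) :
    lift E0 E1 L φ z = max (φ (E0 p) - i) (φ (E1 p) - (L p - i)) := by
  obtain ⟨rfl, rfl⟩ | ⟨rfl, rfl⟩ | ⟨hlt, hi0, hiL, rfl⟩ := h
  · have := hφ p
    simp only [lift, Nat.sub_zero]
    exact (Nat.max_eq_left (by omega)).symm
  · have := hφ p
    simp only [lift, Nat.sub_self, Nat.sub_zero]
    exact (Nat.max_eq_right (by omega)).symm
  · simp only [lift]
    have h1 : i - 1 + 1 = i := by omega
    rw [h1]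

lemma lift_adj (hφ : ∀ p, φ (E0 p) ≤ φ (E1 p) + L p ∧ φ (E1 p) ≤ φ (E0 p) + L p)
    {x y : Vert B P L} (h : (pathGraph E0 E1 L).Adj x y) :
    lift E0 E1 L φ x ≤ lift E0 E1 L φ y + 1 := by
  obtain ⟨-, p, i, hi, ⟨hx, hy⟩ | ⟨hy, hx⟩⟩ := h <;>
    rw [lift_pos E0 E1 L φ hφ hx, lift_pos E0 E1 L φ hφ hy] <;>
    · simp only [Nat.max_def]; split_ifs <;> omega

lemma lift_walk (hφ : ∀ p, φ (E0 p) ≤ φ (E1 p) + L p ∧ φ (E1 p) ≤ φ (E0 p) + L p)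
    {z t : Vert B P L} (W : (pathGraph E0 E1 L).Walk z t) :
    lift E0 E1 L φ z ≤ lift E0 E1 L φ t + W.length := by
  induction W with
  | nil => simp
  | cons hadj W ih =>
      have h1 := lift_adj E0 E1 L φ hφ hadj
      simp only [SimpleGraph.Walk.length_cons]
      omega

end Lipschitz

section Potentials
variable {ℓ : ℕ} {U V : Set (Fin ℓ → Bool)} {w : Fin ℓ → Bool}

/-- Potential certifying distance to the vertex `y` on side `s`. -/
def lamB (a : ℕ) (s : Bool) : Base ℓ U V → ℕ
  | .cU s' _ => if s' = s then 2*a+1 else 6*a+1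
  | .cV s' _ => if s' = s then 2*a else 6*a+2
  | .u0 _ => 4*a+1
  | .ua s' _ => if s' = s then 3*a+1 else 5*a+1
  | .v0 s' _ => if s' = s then a else 7*a+2
  | .va s' _ => if s' = s then 2*a else 8*a+2
  | .x s' => if s' = s then 4*a+1 else 6*a+1
  | .y s' => if s' = s then 0 else 8*a+2

/-- `u` "hits" `v₀` : some coordinate is 1 in `u`, `v₀` and `w`. -/
def Hu (w : Fin ℓ → Bool) (v₀ : V) (u : U) : Prop :=
  ∃ c, u.1 c = true ∧ v₀.1 c = true ∧ w c = true

open Classical in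
/-- Potential certifying distance to the vertex `v₀^a` on side `s`. -/
noncomputable def nuB (a : ℕ) (w : Fin ℓ → Bool) (v₀ : V) (s : Bool) : Base ℓ U V → ℕ
  | .cU s' c => if s' = s then (if v₀.1 c = true ∧ w c = true then 2*a+1 else 4*a+1)
      else (if ∃ u : U, u.1 c = true ∧ Hu w v₀ u then 6*a+1 else 8*a+1)
  | .cV s' c => if s' = s then (if v₀.1 c = true then 2*a else 4*a)
      else (if (∃ u : U, u.1 c = true ∧ Hu w v₀ u) ∧ w c = true then 6*a+2 else 8*a+2)
  | .u0 u => if Hu w v₀ u then 4*a+1 else 6*a+1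
  | .ua s' u => if s' = s then (if Hu w v₀ u then 3*a+1 else 5*a+1)
      else (if Hu w v₀ u then 5*a+1 else 7*a+1)
  | .v0 s' v => if s' = s then (if v = v₀ then a else 3*a) else 7*a+2
  | .va s' v => if s' = s then (if v = v₀ then 0 else 4*a) else 8*a+2
  | .x s' => if s' = s then 4*a+1 else (if ∃ u : U, Hu w v₀ u then 6*a+1 else 8*a+1)
  | .y s' => if s' = s then 2*a else 8*a+2

lemma lamB_cond (a : ℕ) (s : Bool) (p : Pth ℓ U V w) :
    lamB a s (e0 p) ≤ lamB a s (e1 p) + len a p ∧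
      lamB a s (e1 p) ≤ lamB a s (e0 p) + len a p := by
  cases p <;> simp only [e0, e1, len, lamB] <;> split_ifs <;> omega

lemma nuB_cond (a : ℕ) (v₀ : V) (s : Bool) (p : Pth ℓ U V w) :
    nuB a w v₀ s (e0 p) ≤ nuB a w v₀ s (e1 p) + len a p ∧
      nuB a w v₀ s (e1 p) ≤ nuB a w v₀ s (e0 p) + len a p := by
  classical
  cases p with
  | upath s' u => simp only [e0, e1, len, nuB]; split_ifs <;> omega
  | vpath s' v => simp only [e0, e1, len, nuB]; split_ifs <;> omega
  | uc s' u c hc =>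
      by_cases hHu : Hu w v₀ u
      · have hHc : ∃ u' : U, u'.1 c = true ∧ Hu w v₀ u' := ⟨u, hc, hHu⟩
        simp only [e0, e1, len, nuB, if_pos hHu, if_pos hHc]
        split_ifs <;> omega
      · have hvw : ¬(v₀.1 c = true ∧ w c = true) := fun h => hHu ⟨c, hc, h.1, h.2⟩
        simp only [e0, e1, len, nuB, if_neg hHu, if_neg hvw]
        split_ifs <;> omega
  | vc s' v c hc =>
      by_cases hv : v = v₀
      · have hv₀c : v₀.1 c = true := hv ▸ hc
        simp only [e0, e1, len, nuB, if_pos hv, if_pos hv₀c]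
        split_ifs <;> omega
      · simp only [e0, e1, len, nuB, if_neg hv]
        split_ifs <;> omega
  | wc s' c hc =>
      simp only [e0, e1, len, nuB, hc, and_true]
      split_ifs <;> omega
  | xu s' u =>
      by_cases hHu : Hu w v₀ u
      · have hHX : ∃ u' : U, Hu w v₀ u' := ⟨u, hHu⟩
        simp only [e0, e1, len, nuB, if_pos hHu, if_pos hHX]
        split_ifs <;> omega
      · simp only [e0, e1, len, nuB, if_neg hHu]
        split_ifs <;> omega
  | yv s' v => simp only [e0, e1, len, nuB]; split_ifs <;> omega

end Potentials




end RadConstr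

open RadConstr in
theorem radius_construction_no_case
    (a ℓ : ℕ) (ha : 0 < a) (hℓ : 0 < ℓ)
    (U V : Set (Fin ℓ → Bool)) (hUfin : U.Finite) (hVfin : V.Finite)
    (hU : U.Nonempty) (hV : V.Nonempty) (w : Fin ℓ → Bool)
    (hUone : ∀ u ∈ U, ∃ c, u c = true) (hVone : ∀ v ∈ V, ∃ c, v c = true)
    (hUcov : ∀ c : Fin ℓ, ∃ u ∈ U, u c = true)
    (hVcov : ∀ c : Fin ℓ, ∃ v ∈ V, v c = true)
    (hmiss : ∀ u ∈ U, ∃ v ∈ V, ∀ c : Fin ℓ, ¬(u c = true ∧ v c = true ∧ w c = true)) :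
    ∀ z : Vert (Base ℓ U V) (Pth ℓ U V w) (len a),
      ∃ t : Vert (Base ℓ U V) (Pth ℓ U V w) (len a),
        ∀ p : (Grad a ℓ U V w).Walk z t, 6 * a + 1 ≤ p.length := by
  classical
  have key : ∀ (φ : Base ℓ U V → ℕ),
      (∀ p : Pth ℓ U V w, φ (e0 p) ≤ φ (e1 p) + len a p ∧ φ (e1 p) ≤ φ (e0 p) + len a p) →
      ∀ t : Vert (Base ℓ U V) (Pth ℓ U V w) (len a),
      lift e0 e1 (len a) φ t = 0 →
      ∀ z : Vert (Base ℓ U V) (Pth ℓ U V w) (len a), 6*a+1 ≤ lift e0 e1 (len a) φ z →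
      ∀ W : (Grad a ℓ U V w).Walk z t, 6 * a + 1 ≤ W.length := by
    intro φ hφ t ht z hz W
    have h : lift e0 e1 (len a) φ z ≤ lift e0 e1 (len a) φ t + W.length :=
      lift_walk e0 e1 (len a) φ hφ W
    omega
  intro z
  obtain b | ⟨p, j⟩ := z
  · cases b with
    | cU s c =>
        refine ⟨Sum.inl (Base.y (!s)), fun W =>
          key (lamB a (!s)) (lamB_cond a (!s)) _ ?_ _ ?_ W⟩
        · simp [lift, lamB]
        · cases s <;> simp [lift, lamB] <;> omega
    | cV s c =>
        refine ⟨Sum.inl (Base.y (!s)), fun W =>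
          key (lamB a (!s)) (lamB_cond a (!s)) _ ?_ _ ?_ W⟩
        · simp [lift, lamB]
        · cases s <;> simp [lift, lamB] <;> omega
    | v0 s v =>
        refine ⟨Sum.inl (Base.y (!s)), fun W =>
          key (lamB a (!s)) (lamB_cond a (!s)) _ ?_ _ ?_ W⟩
        · simp [lift, lamB]
        · cases s <;> simp [lift, lamB] <;> omega
    | va s v =>
        refine ⟨Sum.inl (Base.y (!s)), fun W =>
          key (lamB a (!s)) (lamB_cond a (!s)) _ ?_ _ ?_ W⟩
        · simp [lift, lamB]
        · cases s <;> simp [lift, lamB] <;> omega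
    | x s =>
        refine ⟨Sum.inl (Base.y (!s)), fun W =>
          key (lamB a (!s)) (lamB_cond a (!s)) _ ?_ _ ?_ W⟩
        · simp [lift, lamB]
        · cases s <;> simp [lift, lamB] <;> omega
    | y s =>
        refine ⟨Sum.inl (Base.y (!s)), fun W =>
          key (lamB a (!s)) (lamB_cond a (!s)) _ ?_ _ ?_ W⟩
        · simp [lift, lamB]
        · cases s <;> simp [lift, lamB] <;> omega
    | u0 u =>
        obtain ⟨v', hv'V, hm⟩ := hmiss u.1 u.2
        have hHu : ¬ Hu w ⟨v', hv'V⟩ u := fun ⟨c, h1, h2, h3⟩ => hm c ⟨h1, h2, h3⟩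
        refine ⟨Sum.inl (Base.va true ⟨v', hv'V⟩), fun W =>
          key (nuB a w ⟨v', hv'V⟩ true) (nuB_cond a ⟨v', hv'V⟩ true) _ ?_ _ ?_ W⟩
        · simp [lift, nuB]
        · simp [lift, nuB, hHu]
    | ua s u =>
        obtain ⟨v', hv'V, hm⟩ := hmiss u.1 u.2
        have hHu : ¬ Hu w ⟨v', hv'V⟩ u := fun ⟨c, h1, h2, h3⟩ => hm c ⟨h1, h2, h3⟩
        refine ⟨Sum.inl (Base.va (!s) ⟨v', hv'V⟩), fun W =>
          key (nuB a w ⟨v', hv'V⟩ (!s)) (nuB_cond a ⟨v', hv'V⟩ (!s)) _ ?_ _ ?_ W⟩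
        · simp [lift, nuB]
        · cases s <;> simp [lift, nuB, hHu] <;> omega
  · cases p with
    | wc s c hwc => exact (Nat.not_lt_zero j.1 (by simpa [len] using j.2)).elim
    | upath s u =>
        obtain ⟨v', hv'V, hm⟩ := hmiss u.1 u.2
        have hHu : ¬ Hu w ⟨v', hv'V⟩ u := fun ⟨c, h1, h2, h3⟩ => hm c ⟨h1, h2, h3⟩
        have hj : (j : ℕ) < a - 1 := by simpa [len] using j.2
        refine ⟨Sum.inl (Base.va (!s) ⟨v', hv'V⟩), fun W =>
          key (nuB a w ⟨v', hv'V⟩ (!s)) (nuB_cond a ⟨v', hv'V⟩ (!s)) _ ?_ _ ?_ W⟩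
        · simp [lift, nuB]
        · simp only [lift]
          refine le_trans ?_ (le_max_right _ _)
          have hv : nuB a w ⟨v', hv'V⟩ (!s) (e1 ((Pth.upath s u : Pth ℓ U V w))) = 7*a+1 := by
            cases s <;> simp [e1, nuB, hHu]
          rw [hv]
          have hl : len a ((Pth.upath s u : Pth ℓ U V w)) = a := rfl
          omega
    | uc s u c hc =>
        obtain ⟨v', hv'V, hm⟩ := hmiss u.1 u.2
        have hHu : ¬ Hu w ⟨v', hv'V⟩ u := fun ⟨c', h1, h2, h3⟩ => hm c' ⟨h1, h2, h3⟩
        have hj : (j : ℕ) < a - 1 := by simpa [len] using j.2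
        refine ⟨Sum.inl (Base.va (!s) ⟨v', hv'V⟩), fun W =>
          key (nuB a w ⟨v', hv'V⟩ (!s)) (nuB_cond a ⟨v', hv'V⟩ (!s)) _ ?_ _ ?_ W⟩
        · simp [lift, nuB]
        · simp only [lift]
          refine le_trans ?_ (le_max_left _ _)
          have hv : nuB a w ⟨v', hv'V⟩ (!s) (e0 ((Pth.uc s u c hc : Pth ℓ U V w))) = 7*a+1 := by
            cases s <;> simp [e0, nuB, hHu]
          rw [hv]
          omega
    | xu s u =>
        obtain ⟨v', hv'V, hm⟩ := hmiss u.1 u.2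
        have hHu : ¬ Hu w ⟨v', hv'V⟩ u := fun ⟨c, h1, h2, h3⟩ => hm c ⟨h1, h2, h3⟩
        have hj : (j : ℕ) < a - 1 := by simpa [len] using j.2
        refine ⟨Sum.inl (Base.va (!s) ⟨v', hv'V⟩), fun W =>
          key (nuB a w ⟨v', hv'V⟩ (!s)) (nuB_cond a ⟨v', hv'V⟩ (!s)) _ ?_ _ ?_ W⟩
        · simp [lift, nuB]
        · simp only [lift]
          refine le_trans ?_ (le_max_right _ _)
          have hv : nuB a w ⟨v', hv'V⟩ (!s) (e1 ((Pth.xu s u : Pth ℓ U V w))) = 7*a+1 := by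
            cases s <;> simp [e1, nuB, hHu]
          rw [hv]
          have hl : len a ((Pth.xu s u : Pth ℓ U V w)) = a := rfl
          omega
    | vpath s v =>
        have hj : (j : ℕ) < a - 1 := by simpa [len] using j.2
        refine ⟨Sum.inl (Base.y (!s)), fun W =>
          key (lamB a (!s)) (lamB_cond a (!s)) _ ?_ _ ?_ W⟩
        · simp [lift, lamB]
        · simp only [lift]
          refine le_trans ?_ (le_max_left _ _)
          have hv : lamB a (!s) (e0 ((Pth.vpath s v : Pth ℓ U V w))) = 7*a+2 := by
            cases s <;> simp [e0, lamB]
          rw [hv]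
          omega
    | vc s v c hc =>
        have hj : (j : ℕ) < a - 1 := by simpa [len] using j.2
        refine ⟨Sum.inl (Base.y (!s)), fun W =>
          key (lamB a (!s)) (lamB_cond a (!s)) _ ?_ _ ?_ W⟩
        · simp [lift, lamB]
        · simp only [lift]
          refine le_trans ?_ (le_max_right _ _)
          have hv : lamB a (!s) (e1 ((Pth.vc s v c hc : Pth ℓ U V w))) = 7*a+2 := by
            cases s <;> simp [e1, lamB]
          rw [hv]
          have hl : len a ((Pth.vc s v c hc : Pth ℓ U V w)) = a := rfl
          omega
    | yv s v =>
        have hj : (j : ℕ) < a - 1 := by simpa [len] using j.2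
        refine ⟨Sum.inl (Base.y (!s)), fun W =>
          key (lamB a (!s)) (lamB_cond a (!s)) _ ?_ _ ?_ W⟩
        · simp [lift, lamB]
        · simp only [lift]
          refine le_trans ?_ (le_max_left _ _)
          have hv : lamB a (!s) (e0 ((Pth.yv s v : Pth ℓ U V w))) = 8*a+2 := by
            cases s <;> simp [e0, lamB]
          rw [hv]
          omega
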